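/- Let H be a real Hilbert space, Ω ⊆ H open, F : Ω → H continuously Fréchet differentiable, T : H ⇉ H maximal monotone, x* ∈ Ω with 0 ∈ F(x*) + T(x*), F'(x*) positive-semidefinite, and F̂'(x*) := (F'(x*)+F'(x*)*)/2 boundedly invertible. Suppose there exists K > 0 with ‖F̂'(x*)⁻¹‖ · ‖F'(x) − F'(y)‖ ≤ K‖x − y‖ for all x, y ∈ Ω. Let κ := sup{t > 0 : B(x*, t) ⊂ Ω} and r := min{κ, 2/(3K)}. Then for any sequence {x_k} with x₀ ∈ B(x*, r) \ {x*} satisfying 0 ∈ F(x_k) + F'(x_k)(x_{k+1} − x_k) + T(x_{k+1}) for all k, and for t₀ := ‖x* − x₀‖, t_{k+1} := (K/2)t_k²/(1 − K t_k): the sequence {t_k} is strictly decreasing, contained in (0, r), and converges to 0; {x_k} is contained in B(x*, r) and converges to x*, which is the unique solution of 0 ∈ F(x) + T(x) in B(x*, σ̄) with σ̄ := min{r, 2/K}; moreover ‖x* − x_{k+1}‖ ≤ (K/2)·(1/(1 − K t_k))·‖x_k − x*‖² ≤ (K/2)·(1/(1 − K‖x₀ − x*‖))·‖x_k − x*‖²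 for all k. -/

import Mathlib

open RealInnerProductSpace Filter Metric Set

/-- A set-valued operator `T : H ⇉ H` is monotone if `⟨u - v, y - x⟩ ≥ 0` whenever
`u ∈ T y` and `v ∈ T x`; it is maximal monotone if moreover every pair `(x, u)` that is
monotonically related to the graph of `T` belongs to the graph of `T`. -/
def IsMaximalMonotone {H : Type*} [NormedAddCommGroup H] [InnerProductSpace ℝ H]
    (T : H → Set H) : Prop :=
  (∀ x y u v : H, u ∈ T y → v ∈ T x → 0 ≤ ⟪u - v, y - x⟫) ∧
  (∀ x u : H, (∀ y v : H, v ∈ T y → 0 ≤ ⟪u - v, x - y⟫) → u ∈ T x)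

/-- Taylor remainder bound for a function with Lipschitz derivative on a convex set. -/
lemma taylor_quad_bound {H : Type*} [NormedAddCommGroup H] [InnerProductSpace ℝ H]
    {s : Set H} (hs : Convex ℝ s) {F : H → H} {F' : H → H →L[ℝ] H}
    (hFd : ∀ x ∈ s, HasFDerivAt F (F' x) x)
    {L : ℝ} (hlip : ∀ x ∈ s, ∀ y ∈ s, ‖F' x - F' y‖ ≤ L * ‖x - y‖)
    {x y : H} (hx : x ∈ s) (hy : y ∈ s) :
    ‖F y - F x - F' x (y - x)‖ ≤ L / 2 * ‖y - x‖ ^ 2 := by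
  set v := y - x with hv
  set g : ℝ → H := fun t => F (x + t • v) - t • (F' x v) - F x with hg
  have hmem : ∀ t ∈ Icc (0:ℝ) 1, x + t • v ∈ s := by
    intro t ht
    have := hs hx hy (by linarith [ht.1, ht.2] : (0:ℝ) ≤ 1 - t) ht.1 (by ring)
    convert this using 1
    simp [hv]
    module
  set g' : ℝ → H := fun t => F' (x + t • v) v - F' x v with hg'
  have hderiv : ∀ t ∈ Icc (0:ℝ) 1, HasDerivAt g (g' t) t := by
    intro t ht
    have hline : HasDerivAt (fun t : ℝ => x + t • v) v t := by
      simpa using ((hasDerivAt_id t).smul_const v).const_add x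
    have h1 : HasDerivAt (fun t : ℝ => F (x + t • v)) (F' (x + t • v) v) t := by
      exact (hFd _ (hmem t ht)).comp_hasDerivAt t hline
    have h2 : HasDerivAt (fun t : ℝ => t • (F' x v)) (F' x v) t := by
      simpa using (hasDerivAt_id t).smul_const (F' x v)
    exact (h1.sub h2).sub_const (F x)
  have hbound : ∀ t ∈ Ico (0:ℝ) 1, ‖g' t‖ ≤ L * ‖v‖ ^ 2 * t := by
    intro t ht
    have hts : x + t • v ∈ s := hmem t ⟨ht.1, ht.2.le⟩
    have : ‖g' t‖ ≤ ‖F' (x + t • v) - F' x‖ * ‖v‖ := by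
      simpa [hg'] using (F' (x + t • v) - F' x).le_opNorm v
    have h2 : ‖F' (x + t • v) - F' x‖ ≤ L * (t * ‖v‖) := by
      have := hlip _ hts _ hx
      simpa [norm_smul, abs_of_nonneg ht.1] using this
    calc ‖g' t‖ ≤ (L * (t * ‖v‖)) * ‖v‖ := this.trans (by
            exact mul_le_mul_of_nonneg_right h2 (norm_nonneg v))
      _ = L * ‖v‖ ^ 2 * t := by ring
  have key := image_norm_le_of_norm_deriv_right_le_deriv_boundary
    (f := g) (f' := g') (a := 0) (b := 1)
    (fun t ht => ((hderiv t ht).continuousAt).continuousWithinAt)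
    (fun t ht => (hderiv t ⟨ht.1, ht.2.le⟩).hasDerivWithinAt)
    (B := fun t => L * ‖v‖ ^ 2 * (t ^ 2 / 2)) (B' := fun t => L * ‖v‖ ^ 2 * t)
    (by simp [hg]) (fun t => by
      have : HasDerivAt (fun t : ℝ => t ^ 2 / 2) t t := by
        simpa using ((hasDerivAt_pow 2 t).div_const 2)
      simpa using this.const_mul (L * ‖v‖ ^ 2))
    hbound
  have := key (right_mem_Icc.2 zero_le_one)
  have hgoal : g 1 = F y - F x - F' x (y - x) := by
    simp [hg, hv]
    abel
  rw [hgoal] at this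
  calc ‖F y - F x - F' x (y - x)‖ ≤ L * ‖v‖ ^ 2 * (1 ^ 2 / 2) := this
    _ = L / 2 * ‖y - x‖ ^ 2 := by rw [hv]; ring

lemma coercive_of_inv {H : Type*} [NormedAddCommGroup H] [InnerProductSpace ℝ H]
    (A G : H →L[ℝ] H) (hsymA : ∀ u v : H, ⟪A u, v⟫ = ⟪u, A v⟫)
    (hpsdA : ∀ u : H, 0 ≤ ⟪A u, u⟫)
    (h1 : ∀ u : H, G (A u) = u) (h2 : ∀ u : H, A (G u) = u) :
    ∀ e : H, ‖e‖ ^ 2 ≤ ‖G‖ * ⟪A e, e⟫ := by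
  have hGsym : ∀ u v : H, ⟪G u, v⟫ = ⟪u, G v⟫ := by
    intro u v
    calc ⟪G u, v⟫ = ⟪G u, A (G v)⟫ := by rw [h2]
      _ = ⟪A (G u), G v⟫ := (hsymA _ _).symm
      _ = ⟪u, G v⟫ := by rw [h2]
  have hGpsd : ∀ u : H, 0 ≤ ⟪G u, u⟫ := by
    intro u
    have heq2 : ⟪G u, u⟫ = ⟪A (G u), G u⟫ := by
      calc ⟪G u, u⟫ = ⟪G u, A (G u)⟫ := by rw [h2]
        _ = ⟪A (G u), G u⟫ := real_inner_comm _ _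
    rw [heq2]; exact hpsdA _
  have hCS : ∀ u v : H, ⟪G u, v⟫ ^ 2 ≤ ⟪G u, u⟫ * ⟪G v, v⟫ := by
    intro u v
    have hq : ∀ t : ℝ, 0 ≤ ⟪G v, v⟫ * (t * t) + (2 * ⟪G u, v⟫) * t + ⟪G u, u⟫ := by
      intro t
      have h0 : (0:ℝ) ≤ ⟪G (u + t • v), u + t • v⟫ := hGpsd _
      have hexp : ⟪G (u + t • v), u + t • v⟫
          = ⟪G v, v⟫ * (t * t) + (2 * ⟪G u, v⟫) * t + ⟪G u, u⟫ := by
        have hc : ⟪G v, u⟫ = ⟪G u, v⟫ := by rw [hGsym, real_inner_comm]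
        simp [map_add, map_smul, inner_add_left, inner_add_right,
          real_inner_smul_left, real_inner_smul_right, hc]
        ring
      linarith [hexp ▸ h0]
    have hd := discrim_le_zero hq
    rw [discrim] at hd
    nlinarith [hd]
  intro e
  have heq : ‖e‖ ^ 2 = ⟪G (A e), e⟫ := by rw [h1, real_inner_self_eq_norm_sq]
  have h3 := hCS (A e) e
  have h4 : ⟪G (A e), A e⟫ = ⟪A e, e⟫ := by
    rw [hGsym, h1, real_inner_comm]
  have h5 : ⟪G e, e⟫ ≤ ‖G‖ * ‖e‖ ^ 2 := by
    calc ⟪G e, e⟫ ≤ ‖G e‖ * ‖e‖ := real_inner_le_norm _ _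
      _ ≤ (‖G‖ * ‖e‖) * ‖e‖ := by
          exact mul_le_mul_of_nonneg_right (G.le_opNorm e) (norm_nonneg e)
      _ = ‖G‖ * ‖e‖ ^ 2 := by ring
  rw [h4, heq.symm] at h3
  rcases eq_or_ne e 0 with rfl | hne
  · simp
  · have hpos : (0:ℝ) < ‖e‖ ^ 2 := pow_pos (norm_pos_iff.mpr hne) 2
    have hApsd : 0 ≤ ⟪A e, e⟫ := hpsdA e
    nlinarith [h3, h5, hpos, hApsd]
set_option maxHeartbeats 1000000

theorem newton_lipschitz_convergence {H : Type*} [NormedAddCommGroup H] [InnerProductSpace ℝ H] [CompleteSpace H]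
    (Ω : Set H) (hΩ : IsOpen Ω) (F : H → H) (F' : H → H →L[ℝ] H)
    (hFd : ∀ x ∈ Ω, HasFDerivAt F (F' x) x) (hF'c : ContinuousOn F' Ω)
    (xs : H) (hxs : xs ∈ Ω)
    (T : H → Set H) (hT : IsMaximalMonotone T)
    (hsol : (0 : H) ∈ (fun w => F xs + w) '' T xs)
    (hpsd : ∀ y : H, 0 ≤ ⟪(F' xs) y, y⟫)
    (Ahat : H →L[ℝ] H)
    (hAhat : Ahat = (1 / 2 : ℝ) • (F' xs + ContinuousLinearMap.adjoint (F' xs)))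
    (Ginv : H →L[ℝ] H)
    (hGinv1 : Ginv.comp Ahat = ContinuousLinearMap.id ℝ H)
    (hGinv2 : Ahat.comp Ginv = ContinuousLinearMap.id ℝ H)
    (K : ℝ) (hK : 0 < K)
    (hlip : ∀ x ∈ Ω, ∀ y ∈ Ω, ‖Ginv‖ * ‖F' x - F' y‖ ≤ K * ‖x - y‖)
    (κ : ℝ) (hκ : κ = sSup {u : ℝ | 0 < u ∧ Metric.ball xs u ⊆ Ω})
    (r : ℝ) (hr : r = min κ (2 / (3 * K)))
    (σbar : ℝ) (hσbar : σbar = min r (2 / K))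
    (xseq : ℕ → H) (hx0 : xseq 0 ∈ Metric.ball xs r) (hx0ne : xseq 0 ≠ xs)
    (hNewton : ∀ k : ℕ, (0 : H) ∈
      (fun w => F (xseq k) + (F' (xseq k)) (xseq (k + 1) - xseq k) + w) '' T (xseq (k + 1)))
    (tseq : ℕ → ℝ) (ht0 : tseq 0 = ‖xs - xseq 0‖)
    (htk : ∀ k : ℕ, tseq (k + 1) = K / 2 * tseq k ^ 2 / (1 - K * tseq k)) :
    StrictAnti tseq ∧ (∀ k : ℕ, tseq k ∈ Set.Ioo (0 : ℝ) r) ∧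
      Filter.Tendsto tseq Filter.atTop (nhds 0) ∧
      (∀ k : ℕ, xseq k ∈ Metric.ball xs r) ∧
      Filter.Tendsto xseq Filter.atTop (nhds xs) ∧
      (∀ y ∈ Metric.ball xs σbar, ((0 : H) ∈ (fun w => F y + w) '' T y ↔ y = xs)) ∧
      ∀ k : ℕ,
        ‖xs - xseq (k + 1)‖ ≤ K / 2 * (1 / (1 - K * tseq k)) * ‖xseq k - xs‖ ^ 2 ∧
          K / 2 * (1 / (1 - K * tseq k)) * ‖xseq k - xs‖ ^ 2 ≤
            K / 2 * (1 / (1 - K * ‖xseq 0 - xs‖)) * ‖xseq k - xs‖ ^ 2 := by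
  -- unpack image memberships
  have himg : ∀ (c : H) (S : Set H), (0:H) ∈ (fun w => c + w) '' S → -c ∈ S := by
    rintro c S ⟨w, hw, hweq⟩
    have hwc : w = -c := eq_neg_of_add_eq_zero_right hweq
    exact hwc ▸ hw
  have hr23 : r ≤ 2 / (3 * K) := hr ▸ min_le_right _ _
  have hrκ : r ≤ κ := hr ▸ min_le_left _ _
  have hd0 : dist (xseq 0) xs < r := mem_ball.mp hx0
  have hr0 : 0 < r := lt_of_le_of_lt dist_nonneg hd0
  have hball : Metric.ball xs r ⊆ Ω := by
    rcases eq_empty_or_nonempty {u : ℝ | 0 < u ∧ Metric.ball xs u ⊆ Ω} with hS | hS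
    · exfalso
      rw [hS, Real.sSup_empty] at hκ
      rw [hκ] at hrκ
      linarith
    · intro y hy
      have hlt : dist y xs < κ := lt_of_lt_of_le (mem_ball.mp hy) hrκ
      rw [hκ] at hlt
      obtain ⟨u, hu, hult⟩ := exists_lt_of_lt_csSup hS hlt
      exact hu.2 (mem_ball.mpr hult)
  -- symmetric part computations
  have hsymA : ∀ u v : H, ⟪Ahat u, v⟫ = ⟪u, Ahat v⟫ := by
    intro u v
    rw [hAhat]
    simp only [ContinuousLinearMap.smul_apply, ContinuousLinearMap.add_apply,
      real_inner_smul_left, real_inner_smul_right, inner_add_left, inner_add_right,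
      ContinuousLinearMap.adjoint_inner_left, ContinuousLinearMap.adjoint_inner_right]
    ring
  have hAe : ∀ u : H, ⟪Ahat u, u⟫ = ⟪F' xs u, u⟫ := by
    intro u
    rw [hAhat]
    simp only [ContinuousLinearMap.smul_apply, ContinuousLinearMap.add_apply,
      real_inner_smul_left, inner_add_left, ContinuousLinearMap.adjoint_inner_left]
    rw [real_inner_comm u (F' xs u)]
    ring
  have hG1 : ∀ u : H, Ginv (Ahat u) = u := by
    intro u
    have := ContinuousLinearMap.ext_iff.1 hGinv1 u
    simpa using this
  have hG2 : ∀ u : H, Ahat (Ginv u) = u := by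
    intro u
    have := ContinuousLinearMap.ext_iff.1 hGinv2 u
    simpa using this
  have hcoerA := coercive_of_inv Ahat Ginv hsymA (fun u => by rw [hAe]; exact hpsd u) hG1 hG2
  have hcoer : ∀ e : H, ‖e‖ ^ 2 ≤ ‖Ginv‖ * ⟪F' xs e, e⟫ := by
    intro e
    have := hcoerA e
    rwa [hAe] at this
  have hx0s : xseq 0 - xs ≠ 0 := sub_ne_zero.mpr hx0ne
  have hGne : Ginv ≠ 0 := by
    intro h
    apply hx0s
    have := hG1 (xseq 0 - xs)
    rw [h] at this
    simpa using this.symm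
  have hc : 0 < ‖Ginv‖ := norm_pos_iff.mpr hGne
  set c := ‖Ginv‖ with hcdef
  set L := K / c with hLdef
  have hLpos : 0 < L := div_pos hK hc
  have hcL : c * L = K := by rw [hLdef]; field_simp
  have hlip' : ∀ x ∈ Ω, ∀ y ∈ Ω, ‖F' x - F' y‖ ≤ L * ‖x - y‖ := by
    intro x hx y hy
    rw [hLdef, div_mul_eq_mul_div, le_div_iff₀ hc]
    calc ‖F' x - F' y‖ * c = c * ‖F' x - F' y‖ := mul_comm _ _
      _ ≤ K * ‖x - y‖ := hlip x hx y hy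
  have htay : ∀ x ∈ Metric.ball xs r, ∀ y ∈ Metric.ball xs r,
      ‖F y - F x - F' x (y - x)‖ ≤ L / 2 * ‖y - x‖ ^ 2 :=
    fun x hx y hy => taylor_quad_bound (convex_ball xs r) (fun z hz => hFd z (hball hz))
      (fun a ha b hb => hlip' a (hball ha) b (hball hb)) hx hy
  have hxsball : xs ∈ Metric.ball xs r := mem_ball_self hr0
  have hvsol : -F xs ∈ T xs := himg _ _ hsol
  -- the key one-step estimate
  have hstep : ∀ a b : H, a ∈ Metric.ball xs r → -(F a + F' a (b - a)) ∈ T b →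
      ‖xs - b‖ ≤ K / 2 * (1 / (1 - K * ‖a - xs‖)) * ‖a - xs‖ ^ 2 := by
    intro a b ha hb
    set s := ‖a - xs‖ with hsdef
    have hsr : s < r := by rw [hsdef, ← dist_eq_norm]; exact mem_ball.mp ha
    have hKs : K * s < 2 / 3 := by
      calc K * s < K * r := mul_lt_mul_of_pos_left hsr hK
        _ ≤ K * (2 / (3 * K)) := mul_le_mul_of_nonneg_left hr23 hK.le
        _ = 2 / 3 := by field_simp
    have hden : 0 < 1 - K * s := by linarith
    set e := b - xs with he
    have hmono := hT.1 xs b _ _ hb hvsol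
    set R := F xs - F a - F' a (xs - a) with hR
    have hrw : -(F a + F' a (b - a)) - -F xs = R - F' a e := by
      rw [hR, he]
      have hba : b - a = (xs - a) + (b - xs) := by abel
      rw [hba, map_add]
      abel
    rw [hrw] at hmono
    have hRb : ‖R‖ ≤ L / 2 * s ^ 2 := by
      have := htay a ha xs hxsball
      rw [hR, hsdef, norm_sub_rev a xs]
      exact this
    have h1 : ⟪R - F' a e, e⟫ = ⟪R, e⟫ - ⟪F' a e, e⟫ := inner_sub_left _ _ _
    have h2 : ⟪F' a e, e⟫ = ⟪F' xs e, e⟫ + ⟪(F' a - F' xs) e, e⟫ := by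
      simp [ContinuousLinearMap.sub_apply, inner_sub_left]
    have hl : ‖F' a - F' xs‖ ≤ L * s := hlip' a (hball ha) xs hxs
    have h3 : -(L * s * ‖e‖ ^ 2) ≤ ⟪(F' a - F' xs) e, e⟫ := by
      have habs : |⟪(F' a - F' xs) e, e⟫| ≤ ‖(F' a - F' xs) e‖ * ‖e‖ :=
        abs_real_inner_le_norm _ _
      have hop : ‖(F' a - F' xs) e‖ ≤ ‖F' a - F' xs‖ * ‖e‖ := (F' a - F' xs).le_opNorm e
      have hfin : |⟪(F' a - F' xs) e, e⟫| ≤ (L * s) * ‖e‖ ^ 2 := by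
        calc |⟪(F' a - F' xs) e, e⟫| ≤ ‖(F' a - F' xs) e‖ * ‖e‖ := habs
          _ ≤ (‖F' a - F' xs‖ * ‖e‖) * ‖e‖ :=
              mul_le_mul_of_nonneg_right hop (norm_nonneg e)
          _ ≤ ((L * s) * ‖e‖) * ‖e‖ := by
              exact mul_le_mul_of_nonneg_right
                (mul_le_mul_of_nonneg_right hl (norm_nonneg e)) (norm_nonneg e)
          _ = (L * s) * ‖e‖ ^ 2 := by ring
      linarith [neg_abs_le ⟪(F' a - F' xs) e, e⟫]
    have h4 : ⟪R, e⟫ ≤ L / 2 * s ^ 2 * ‖e‖ := by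
      calc ⟪R, e⟫ ≤ ‖R‖ * ‖e‖ := real_inner_le_norm _ _
        _ ≤ (L / 2 * s ^ 2) * ‖e‖ := mul_le_mul_of_nonneg_right hRb (norm_nonneg e)
    have hcoe := hcoer e
    have hsum : ⟪F' xs e, e⟫ ≤ L / 2 * s ^ 2 * ‖e‖ + L * s * ‖e‖ ^ 2 := by
      rw [h1, h2] at hmono
      linarith
    have hmul := mul_le_mul_of_nonneg_left hsum hc.le
    have hKsub : c * (L / 2 * s ^ 2 * ‖e‖ + L * s * ‖e‖ ^ 2)
        = K / 2 * s ^ 2 * ‖e‖ + K * s * ‖e‖ ^ 2 := by rw [← hcL]; ring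
    have hcomb : (1 - K * s) * ‖e‖ ^ 2 ≤ K / 2 * s ^ 2 * ‖e‖ := by
      rw [hKsub] at hmul
      nlinarith [hcoe, hmul]
    have hnrm : ‖xs - b‖ = ‖e‖ := by rw [he, norm_sub_rev]
    rw [hnrm]
    have hform : K / 2 * (1 / (1 - K * s)) * s ^ 2 = (K / 2 * s ^ 2) / (1 - K * s) := by
      ring
    rw [hform, le_div_iff₀ hden]
    rcases eq_or_lt_of_le (norm_nonneg e) with h0 | h0
    · rw [← h0, zero_mul]
      have : (0:ℝ) ≤ K / 2 * s ^ 2 := mul_nonneg (by linarith) (sq_nonneg s)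
      linarith
    · refine le_of_mul_le_mul_right ?_ h0
      nlinarith [hcomb]
  -- majorant function facts
  have hphi_lt : ∀ t : ℝ, 0 < t → t < 2 / (3 * K) → K / 2 * t ^ 2 / (1 - K * t) < t := by
    intro t h0 h1
    have hKt : K * t < 2 / 3 := by
      calc K * t < K * (2 / (3 * K)) := mul_lt_mul_of_pos_left h1 hK
        _ = 2 / 3 := by field_simp
    have hden : 0 < 1 - K * t := by linarith
    rw [div_lt_iff₀ hden]
    nlinarith
  have hphi_mono : ∀ s t : ℝ, 0 ≤ s → s ≤ t → K * t < 1 →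
      K / 2 * s ^ 2 / (1 - K * s) ≤ K / 2 * t ^ 2 / (1 - K * t) := by
    intro s t hs hst ht
    have hdt : 0 < 1 - K * t := by linarith
    have hKs : K * s ≤ K * t := mul_le_mul_of_nonneg_left hst hK.le
    have hds : 0 < 1 - K * s := by linarith
    rw [div_le_div_iff₀ hds hdt]
    have ht0 : 0 ≤ t := le_trans hs hst
    have hkey : 0 ≤ (t - s) * (t + s - K * s * t) := by
      apply mul_nonneg (sub_nonneg.2 hst)
      nlinarith [mul_nonneg ht0 hds.le]
    nlinarith [mul_nonneg hK.le hkey]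
  have ht0pos : 0 < tseq 0 := by
    rw [ht0]
    exact norm_pos_iff.mpr (sub_ne_zero.mpr (Ne.symm hx0ne))
  have ht0r : tseq 0 < r := by
    rw [ht0, norm_sub_rev, ← dist_eq_norm]
    exact hd0
  -- main induction
  have hinv : ∀ k, 0 < tseq k ∧ tseq k < r ∧ ‖xseq k - xs‖ ≤ tseq k := by
    intro k
    induction k with
    | zero => exact ⟨ht0pos, ht0r, le_of_eq (by rw [ht0, norm_sub_rev])⟩
    | succ k ih =>
      obtain ⟨hp, hrk, hsk⟩ := ih
      have hKt : K * tseq k < 2 / 3 := by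
        calc K * tseq k < K * r := mul_lt_mul_of_pos_left hrk hK
          _ ≤ K * (2 / (3 * K)) := mul_le_mul_of_nonneg_left hr23 hK.le
          _ = 2 / 3 := by field_simp
      have hden : 0 < 1 - K * tseq k := by linarith
      have haball : xseq k ∈ Metric.ball xs r :=
        mem_ball.mpr (lt_of_le_of_lt (by rw [dist_eq_norm]; exact hsk) hrk)
      have hb := hstep (xseq k) (xseq (k + 1)) haball (himg _ _ (hNewton k))
      have hnext : ‖xseq (k + 1) - xs‖ ≤ tseq (k + 1) := by
        rw [htk k]
        have hsle : K * ‖xseq k - xs‖ < 1 := by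
          have := mul_le_mul_of_nonneg_left hsk hK.le
          linarith
        calc ‖xseq (k + 1) - xs‖ = ‖xs - xseq (k + 1)‖ := norm_sub_rev _ _
          _ ≤ K / 2 * (1 / (1 - K * ‖xseq k - xs‖)) * ‖xseq k - xs‖ ^ 2 := hb
          _ = K / 2 * ‖xseq k - xs‖ ^ 2 / (1 - K * ‖xseq k - xs‖) := by ring
          _ ≤ K / 2 * tseq k ^ 2 / (1 - K * tseq k) :=
              hphi_mono _ _ (norm_nonneg _) hsk (by linarith)
      have hpos1 : 0 < tseq (k + 1) := by
        rw [htk k]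
        exact div_pos (mul_pos (by linarith) (pow_pos hp 2)) hden
      have hlt : tseq (k + 1) < tseq k := by
        rw [htk k]
        exact hphi_lt _ hp (lt_of_lt_of_le hrk hr23)
      exact ⟨hpos1, lt_trans hlt hrk, hnext⟩
  have hanti : StrictAnti tseq := strictAnti_nat_of_succ_lt (fun k => by
    rw [htk k]
    exact hphi_lt _ (hinv k).1 (lt_of_lt_of_le (hinv k).2.1 hr23))
  have hballs : ∀ k, xseq k ∈ Metric.ball xs r := fun k =>
    mem_ball.mpr (lt_of_le_of_lt (by rw [dist_eq_norm]; exact (hinv k).2.2) (hinv k).2.1)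
  -- convergence of tseq
  have hKt0 : K * tseq 0 < 2 / 3 := by
    calc K * tseq 0 < K * r := mul_lt_mul_of_pos_left ht0r hK
      _ ≤ K * (2 / (3 * K)) := mul_le_mul_of_nonneg_left hr23 hK.le
      _ = 2 / 3 := by field_simp
  have hdt0 : 0 < 1 - K * tseq 0 := by linarith
  set q := K * tseq 0 / (2 * (1 - K * tseq 0)) with hq
  have hq0 : 0 ≤ q := div_nonneg (mul_nonneg hK.le ht0pos.le) (by linarith)
  have hq1 : q < 1 := by
    rw [hq, div_lt_one (by linarith)]
    linarith
  have hrec : ∀ k, tseq (k + 1) ≤ q * tseq k := by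
    intro k
    obtain ⟨hp, hrk, _⟩ := hinv k
    have hle : tseq k ≤ tseq 0 := hanti.antitone (Nat.zero_le k)
    have hKt : K * tseq k < 2 / 3 := by
      calc K * tseq k < K * r := mul_lt_mul_of_pos_left hrk hK
        _ ≤ K * (2 / (3 * K)) := mul_le_mul_of_nonneg_left hr23 hK.le
        _ = 2 / 3 := by field_simp
    have hden : 0 < 1 - K * tseq k := by linarith
    rw [htk k, hq]
    have hform : K * tseq 0 / (2 * (1 - K * tseq 0)) * tseq k
        = (K * tseq 0 * tseq k) / (2 * (1 - K * tseq 0)) := by ring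
    rw [hform, div_le_div_iff₀ hden (by linarith)]
    nlinarith [mul_nonneg (mul_nonneg hK.le hp.le) (sub_nonneg.2 hle)]
  have hgeo : ∀ k, tseq k ≤ q ^ k * tseq 0 := by
    intro k
    induction k with
    | zero => simp
    | succ k ih =>
      calc tseq (k + 1) ≤ q * tseq k := hrec k
        _ ≤ q * (q ^ k * tseq 0) := mul_le_mul_of_nonneg_left ih hq0
        _ = q ^ (k + 1) * tseq 0 := by ring
  have httend : Filter.Tendsto tseq Filter.atTop (nhds 0) := by
    apply squeeze_zero (fun k => (hinv k).1.le) hgeo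
    have := (tendsto_pow_atTop_nhds_zero_of_lt_one hq0 hq1).mul_const (tseq 0)
    simpa using this
  have hxtend : Filter.Tendsto xseq Filter.atTop (nhds xs) := by
    rw [tendsto_iff_dist_tendsto_zero]
    exact squeeze_zero (fun k => dist_nonneg)
      (fun k => by rw [dist_eq_norm]; exact (hinv k).2.2) httend
  -- uniqueness
  have hσr : σbar ≤ r := hσbar ▸ min_le_left _ _
  have hσK : σbar ≤ 2 / K := hσbar ▸ min_le_right _ _
  have huniq : ∀ y ∈ Metric.ball xs σbar, ((0 : H) ∈ (fun w => F y + w) '' T y ↔ y = xs) := by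
    intro y hy
    constructor
    · intro h0
      have hTy := himg _ _ h0
      have hyr : y ∈ Metric.ball xs r := mem_ball.mpr (lt_of_lt_of_le (mem_ball.mp hy) hσr)
      have hmono := hT.1 xs y _ _ hTy hvsol
      set e := y - xs with he
      set R := F y - F xs - F' xs e with hR
      have hrw : -F y - -F xs = -R - F' xs e := by rw [hR]; abel
      rw [hrw] at hmono
      have hRb : ‖R‖ ≤ L / 2 * ‖e‖ ^ 2 := by
        rw [hR, he]
        exact htay xs hxsball y hyr
      have hIP : ⟪-R - F' xs e, e⟫ = -⟪R, e⟫ - ⟪F' xs e, e⟫ := by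
        simp [inner_sub_left, inner_neg_left]
      have h4 : -⟪R, e⟫ ≤ L / 2 * ‖e‖ ^ 2 * ‖e‖ := by
        calc -⟪R, e⟫ = ⟪-R, e⟫ := (inner_neg_left _ _).symm
          _ ≤ ‖-R‖ * ‖e‖ := real_inner_le_norm _ _
          _ = ‖R‖ * ‖e‖ := by rw [norm_neg]
          _ ≤ (L / 2 * ‖e‖ ^ 2) * ‖e‖ := mul_le_mul_of_nonneg_right hRb (norm_nonneg e)
      have hcoe := hcoer e
      have hFe : ⟪F' xs e, e⟫ ≤ L / 2 * ‖e‖ ^ 2 * ‖e‖ := by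
        rw [hIP] at hmono
        linarith
      by_contra hne
      have hepos : 0 < ‖e‖ := norm_pos_iff.mpr (sub_ne_zero.mpr hne)
      have hmul := mul_le_mul_of_nonneg_left hFe hc.le
      have heqq : c * (L / 2 * ‖e‖ ^ 2 * ‖e‖) = K / 2 * ‖e‖ ^ 3 := by
        rw [← hcL]; ring
      have h6 : ‖e‖ ^ 2 ≤ K / 2 * ‖e‖ ^ 3 := by
        rw [heqq] at hmul
        linarith [hcoe]
      have h7 : 2 / K ≤ ‖e‖ := by
        rw [div_le_iff₀ hK]
        nlinarith [h6, hepos, mul_pos hepos hepos]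
      have h8 : ‖e‖ < 2 / K := by
        rw [he, ← dist_eq_norm]
        exact lt_of_lt_of_le (mem_ball.mp hy) hσK
      linarith
    · rintro rfl
      exact hsol
  refine ⟨hanti, fun k => ⟨(hinv k).1, (hinv k).2.1⟩, httend, hballs, hxtend, huniq, ?_⟩
  intro k
  obtain ⟨hp, hrk, hsk⟩ := hinv k
  have hKt : K * tseq k < 2 / 3 := by
    calc K * tseq k < K * r := mul_lt_mul_of_pos_left hrk hK
      _ ≤ K * (2 / (3 * K)) := mul_le_mul_of_nonneg_left hr23 hK.le
      _ = 2 / 3 := by field_simp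
  have hden : 0 < 1 - K * tseq k := by linarith
  have hdens : 0 < 1 - K * ‖xseq k - xs‖ := by
    have := mul_le_mul_of_nonneg_left hsk hK.le
    linarith
  have hb := hstep (xseq k) (xseq (k + 1)) (hballs k) (himg _ _ (hNewton k))
  have hx0eq : ‖xseq 0 - xs‖ = tseq 0 := by rw [ht0, norm_sub_rev]
  have htk0 : tseq k ≤ tseq 0 := hanti.antitone (Nat.zero_le k)
  constructor
  · have hdivle : 1 / (1 - K * ‖xseq k - xs‖) ≤ 1 / (1 - K * tseq k) := by
      apply one_div_le_one_div_of_le hden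
      have := mul_le_mul_of_nonneg_left hsk hK.le
      linarith
    calc ‖xs - xseq (k + 1)‖
        ≤ K / 2 * (1 / (1 - K * ‖xseq k - xs‖)) * ‖xseq k - xs‖ ^ 2 := hb
      _ ≤ K / 2 * (1 / (1 - K * tseq k)) * ‖xseq k - xs‖ ^ 2 := by
          apply mul_le_mul_of_nonneg_right _ (sq_nonneg _)
          exact mul_le_mul_of_nonneg_left hdivle (by linarith)
  · rw [hx0eq]
    have hdivle : 1 / (1 - K * tseq k) ≤ 1 / (1 - K * tseq 0) := by
      apply one_div_le_one_div_of_le hdt0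
      have := mul_le_mul_of_nonneg_left htk0 hK.le
      linarith
    apply mul_le_mul_of_nonneg_right _ (sq_nonneg _)
    exact mul_le_mul_of_nonneg_left hdivle (by linarith)
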